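/- arXiv:0710.4497 — 2 statements merged into one kernel-verified Lean document; each statement's English description precedes it below -/
import Mathlib

section
/- For a vertex p of a triangulated surface in ℝ³ with neighboring vertices p_1,…,p_n in cyclic order, the negative gradient with respect to p of the total area of the triangles (p, p_i, p_{i+1}) equals (1/2)Σ_i (cot α_i + cot β_i)(p_i − p), where α_i, β_i are the angles opposite the edge pp_i in the two triangles containing it. -/
open InnerProductGeometry

/-- The cross product on `ℝ³` with its euclidean inner-product structure. -/
noncomputable def cross3 (u v : EuclideanSpace ℝ (Fin 3)) :
    EuclideanSpace ℝ (Fin 3) :=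
  WithLp.toLp 2 (crossProduct u v)

section Aux
open RealInnerProductSpace

local notation "E3" => EuclideanSpace ℝ (Fin 3)

lemma cross3_add_left (c : E3) : ∀ u v : E3, cross3 (u+v) c = cross3 u c + cross3 v c := by
  intro u v; ext j; fin_cases j <;> simp [cross3, crossProduct] <;> ring

lemma cross3_smul_left (c : E3) : ∀ (r : ℝ) (u : E3), cross3 (r • u) c = r • cross3 u c := by
  intro r u; ext j; fin_cases j <;> simp [cross3, crossProduct] <;> ring

/-- `v ↦ v × c` as a continuous linear map. -/
noncomputable def crossCLM (c : E3) : E3 →L[ℝ] E3 :=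
  LinearMap.toContinuousLinearMap
    { toFun := fun v => cross3 v c
      map_add' := cross3_add_left c
      map_smul' := cross3_smul_left c }

lemma affine_N (a b x : E3) : cross3 (a-x) (b-x) = cross3 a b + cross3 x (a-b) := by
  ext j; fin_cases j <;> simp [cross3, crossProduct] <;> ring

lemma grad_tri (a b p : E3) (h : cross3 (a-p) (b-p) ≠ 0) :
    HasGradientAt (fun x => (1/2 : ℝ) * ‖cross3 (a-x) (b-x)‖)
      ((2*‖cross3 (a-p) (b-p)‖)⁻¹ • cross3 (a-b) (cross3 (a-p) (b-p))) p := by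
  set N : E3 → E3 := fun x => cross3 (a-x) (b-x) with hN
  have hNp : ‖N p‖ ≠ 0 := norm_ne_zero_iff.2 h
  have hNd : HasFDerivAt N (crossCLM (a-b)) p := by
    have : HasFDerivAt (fun x : E3 => cross3 a b + crossCLM (a-b) x) (crossCLM (a-b)) p :=
      ((crossCLM (a-b)).hasFDerivAt).const_add _
    refine this.congr_of_eventuallyEq ?_
    filter_upwards with x
    simp [hN, affine_N, crossCLM, LinearMap.toContinuousLinearMap]
  have hg : HasFDerivAt (fun x => ‖N x‖^2) (2 • (innerSL ℝ (N p)).comp (crossCLM (a-b))) p :=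
    hNd.norm_sq
  have hs : HasFDerivAt (fun x => Real.sqrt (‖N x‖^2))
      ((1 / (2 * Real.sqrt (‖N p‖^2))) • (2 • (innerSL ℝ (N p)).comp (crossCLM (a-b)))) p :=
    (Real.hasDerivAt_sqrt (by positivity)).comp_hasFDerivAt p hg
  have hs' : HasFDerivAt (fun x => (1/2 : ℝ) * ‖N x‖)
      ((1/2 : ℝ) • ((1 / (2 * Real.sqrt (‖N p‖^2))) •
        (2 • (innerSL ℝ (N p)).comp (crossCLM (a-b))))) p := by
    have := hs.const_smul (1/2 : ℝ)
    refine (this.congr_of_eventuallyEq ?_)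
    filter_upwards with x
    rw [Pi.smul_apply, Real.sqrt_sq (norm_nonneg _)]
    simp [smul_eq_mul]
  rw [hasGradientAt_iff_hasFDerivAt]
  refine hs'.congr_fderiv ?_
  symm
  ext v
  rw [Real.sqrt_sq (norm_nonneg _)]
  simp only [InnerProductSpace.toDual_apply_apply, ContinuousLinearMap.smul_apply,
    ContinuousLinearMap.comp_apply, innerSL_apply_apply, smul_eq_mul,
    ContinuousLinearMap.coe_smul', Pi.smul_apply, real_inner_smul_left]
  have h1 : (crossCLM (a-b)) v = cross3 v (a-b) := rfl
  rw [h1]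
  simp only [hN]
  simp [cross3, crossProduct, PiLp.inner_apply, Fin.sum_univ_three]
  ring

lemma cross3_zero_left (y : E3) : cross3 0 y = 0 := by
  ext j; fin_cases j <;> simp [cross3, crossProduct]

lemma cross3_zero_right (x : E3) : cross3 x 0 = 0 := by
  ext j; fin_cases j <;> simp [cross3, crossProduct]

lemma lagrange (x y : E3) : ‖cross3 x y‖^2 = ⟪x,x⟫*⟪y,y⟫ - ⟪x,y⟫*⟪x,y⟫ := by
  rw [← real_inner_self_eq_norm_sq]
  simp [cross3, crossProduct, PiLp.inner_apply, Fin.sum_univ_three, EuclideanSpace.norm_sq_eq]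
  ring

lemma cot_eq (x y : E3) (h : cross3 x y ≠ 0) :
    Real.cos (angle x y) / Real.sin (angle x y) = ⟪x,y⟫ / ‖cross3 x y‖ := by
  have hx : x ≠ 0 := by rintro rfl; exact h (cross3_zero_left y)
  have hy : y ≠ 0 := by rintro rfl; exact h (cross3_zero_right x)
  have hxy : ‖x‖ * ‖y‖ ≠ 0 := mul_ne_zero (norm_ne_zero_iff.2 hx) (norm_ne_zero_iff.2 hy)
  have hs := sin_angle_mul_norm_mul_norm x y
  have hN : ‖cross3 x y‖ = Real.sqrt (⟪x,x⟫*⟪y,y⟫ - ⟪x,y⟫*⟪x,y⟫) := by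
    rw [← lagrange, Real.sqrt_sq (norm_nonneg _)]
  rw [← hN] at hs
  have hNne : ‖cross3 x y‖ ≠ 0 := norm_ne_zero_iff.2 h
  have hsin : Real.sin (angle x y) = ‖cross3 x y‖ / (‖x‖ * ‖y‖) := by
    field_simp at hs ⊢; linarith
  have hcos : Real.cos (angle x y) = ⟪x,y⟫ / (‖x‖ * ‖y‖) := cos_angle x y
  rw [hsin, hcos]
  field_simp

lemma crossA (u v : E3) : cross3 (-v) (u-v) = cross3 u v := by
  ext j; fin_cases j <;> simp [cross3, crossProduct] <;> ring

lemma crossB (u v : E3) : cross3 (-u) (v-u) = -cross3 u v := by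
  ext j; fin_cases j <;> simp [cross3, crossProduct] <;> ring

lemma key_bac (u v : E3) :
    -(cross3 (u-v) (cross3 u v)) = (⟪v,v⟫-⟪u,v⟫) • u + (⟪u,u⟫-⟪u,v⟫) • v := by
  ext j
  fin_cases j <;>
    · simp only [PiLp.neg_apply, PiLp.smul_apply, PiLp.add_apply, PiLp.sub_apply,
        smul_eq_mul, PiLp.inner_apply, RCLike.inner_apply, conj_trivial,
        Fin.sum_univ_three, cross3, crossProduct]
      simp
      ring

lemma tri_identity (u v : E3) (h : cross3 u v ≠ 0) :
    -((2*‖cross3 u v‖)⁻¹ • cross3 (u-v) (cross3 u v))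
      = (1/2:ℝ) • ((Real.cos (angle (-v) (u-v)) / Real.sin (angle (-v) (u-v))) • u
                + (Real.cos (angle (-u) (v-u)) / Real.sin (angle (-u) (v-u))) • v) := by
  have h1 : cross3 (-v) (u-v) ≠ 0 := by rw [crossA]; exact h
  have h2 : cross3 (-u) (v-u) ≠ 0 := by rw [crossB]; simpa using h
  have hNne : ‖cross3 u v‖ ≠ 0 := norm_ne_zero_iff.2 h
  rw [cot_eq _ _ h1, cot_eq _ _ h2, crossA, crossB, norm_neg]
  have s1 : ⟪(-v : E3), u-v⟫ = ⟪v,v⟫-⟪u,v⟫ := by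
    rw [inner_sub_right, inner_neg_left, inner_neg_left, real_inner_comm v u]; ring
  have s2 : ⟪(-u : E3), v-u⟫ = ⟪u,u⟫-⟪u,v⟫ := by
    rw [inner_sub_right, inner_neg_left, inner_neg_left]; ring
  rw [s1, s2, ← smul_neg, key_bac, smul_add, smul_add, smul_smul, smul_smul,
    smul_smul, smul_smul]
  congr 1
  · congr 1
    field_simp
  · congr 1
    field_simp

end Aux

/-- **The cotangent formula.**
Let `p` be a vertex of a triangulated surface in `ℝ³` whose star consists of
the nondegenerate triangles `(p, pᵢ, pᵢ₊₁)` (neighbours `pᵢ` in cyclic order,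
indices mod `n`).  Let `αᵢ` be the angle at `pᵢ₊₁` in triangle
`(p, pᵢ, pᵢ₊₁)` and `βᵢ` the angle at `pᵢ₋₁` in triangle `(p, pᵢ₋₁, pᵢ)`
(the two angles opposite the edge `p pᵢ`).  Then the negative gradient with
respect to `p` of the total area `Σᵢ (1/2)‖(pᵢ − x) × (pᵢ₊₁ − x)‖` equals
`(1/2) Σᵢ (cot αᵢ + cot βᵢ)(pᵢ − p)`. -/
theorem cotangent_formula_star
    (n : ℕ) [NeZero n] (p : EuclideanSpace ℝ (Fin 3))
    (q : ZMod n → EuclideanSpace ℝ (Fin 3))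
    (hnd : ∀ i, cross3 (q i - p) (q (i+1) - p) ≠ 0)
    (α β : ZMod n → ℝ)
    (hα : ∀ i, α i = angle (p - q (i+1)) (q i - q (i+1)))
    (hβ : ∀ i, β i = angle (p - q (i-1)) (q i - q (i-1))) :
    -gradient (fun x => ∑ i : ZMod n, (1/2 : ℝ) * ‖cross3 (q i - x) (q (i+1) - x)‖) p
      = (1/2 : ℝ) • ∑ i : ZMod n,
          (Real.cos (α i) / Real.sin (α i) + Real.cos (β i) / Real.sin (β i))
            • (q i - p) := by
  classical
  set G : ZMod n → EuclideanSpace ℝ (Fin 3) := fun i =>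
    (2*‖cross3 (q i - p) (q (i+1) - p)‖)⁻¹ •
      cross3 (q i - q (i+1)) (cross3 (q i - p) (q (i+1) - p)) with hG
  have hsum : HasGradientAt
      (fun x => ∑ i : ZMod n, (1/2 : ℝ) * ‖cross3 (q i - x) (q (i+1) - x)‖)
      (∑ i : ZMod n, G i) p := by
    rw [hasGradientAt_iff_hasFDerivAt, map_sum]
    exact HasFDerivAt.fun_sum fun i _ =>
      (grad_tri (q i) (q (i+1)) p (hnd i)).hasFDerivAt
  rw [hsum.gradient, ← Finset.sum_neg_distrib]
  have hterm : ∀ i : ZMod n, -G i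
      = (1/2:ℝ) • ((Real.cos (α i) / Real.sin (α i)) • (q i - p)
          + (Real.cos (β (i+1)) / Real.sin (β (i+1))) • (q (i+1) - p)) := by
    intro i
    have e3 : q i - q (i+1) = (q i - p) - (q (i+1) - p) := by abel
    have hβ' : β (i+1) = angle (-(q i - p)) ((q (i+1) - p) - (q i - p)) := by
      rw [hβ (i+1), add_sub_cancel_right, neg_sub, sub_sub_sub_cancel_right]
    have hα' : α i = angle (-(q (i+1) - p)) ((q i - p) - (q (i+1) - p)) := by
      rw [hα i, neg_sub, sub_sub_sub_cancel_right]
    have hGi : -G i = -((2*‖cross3 (q i - p) (q (i+1) - p)‖)⁻¹ •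
        cross3 (q i - q (i+1)) (cross3 (q i - p) (q (i+1) - p))) := rfl
    rw [hGi, e3, tri_identity _ _ (hnd i), hα', hβ']
  rw [Finset.sum_congr rfl (fun i _ => hterm i), ← Finset.smul_sum]
  congr 1
  rw [Finset.sum_add_distrib]
  have hre : ∑ i : ZMod n, (Real.cos (β (i+1)) / Real.sin (β (i+1))) • (q (i+1) - p)
      = ∑ i : ZMod n, (Real.cos (β i) / Real.sin (β i)) • (q i - p) :=
    Fintype.sum_equiv (Equiv.addRight (1 : ZMod n)) _ _ (fun i => rfl)
  rw [hre, ← Finset.sum_add_distrib]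
  exact Finset.sum_congr rfl fun i _ => (add_smul _ _ _).symm
end

section
/- For a nondegenerate triangle (p, q, r) in ℝ³, the gradient of Area with respect to p can be written in the cotangent form: ∇_p Area = (1/2)[cot(∠q)(p − r) + cot(∠r)(p − q)], where ∠q, ∠r are the interior angles at q and r. -/
open InnerProductGeometry Matrix

local notation "E3" => EuclideanSpace ℝ (Fin 3)

lemma inner_eq_dot (a b : E3) : (inner ℝ a b : ℝ) = (a : Fin 3 → ℝ) ⬝ᵥ (b : Fin 3 → ℝ) := by
  simp [PiLp.inner_apply, dotProduct, RCLike.inner_apply, mul_comm]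

lemma key_affine (q r x : E3) :
    cross3 (q - x) (r - x) = cross3 q r + cross3 x (q - r) := by
  ext i
  fin_cases i <;> simp [cross3, cross_apply] <;> ring

lemma hasFDerivAt_norm' {F : Type*} [NormedAddCommGroup F] [InnerProductSpace ℝ F]
    {y : F} (hy : y ≠ 0) : HasFDerivAt (‖·‖) (‖y‖⁻¹ • innerSL ℝ y) y := by
  have h1 : HasFDerivAt (fun x : F => ‖x‖ ^ 2) (2 • innerSL ℝ y) y :=
    (hasStrictFDerivAt_norm_sq y).hasFDerivAt
  have h2 : HasDerivAt Real.sqrt (1 / (2 * Real.sqrt (‖y‖ ^ 2))) (‖y‖ ^ 2) :=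
    Real.hasDerivAt_sqrt (pow_ne_zero 2 (norm_ne_zero_iff.mpr hy))
  have h3 := h2.comp_hasFDerivAt y h1
  have hny : ‖y‖ ≠ 0 := norm_ne_zero_iff.mpr hy
  have heq : (fun x : F => Real.sqrt (‖x‖ ^ 2)) = fun x : F => ‖x‖ := by
    funext x; rw [Real.sqrt_sq (norm_nonneg x)]
  simp only [Function.comp_def] at h3
  rw [heq] at h3
  refine h3.congr_fderiv ?_
  rw [Real.sqrt_sq (norm_nonneg y)]
  ext v
  simp [ContinuousLinearMap.smul_apply, smul_smul]
  field_simp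

lemma sqrt_sub_inner (u v : E3) :
    Real.sqrt ((inner ℝ u u : ℝ) * inner ℝ v v - inner ℝ u v * inner ℝ u v) = ‖cross3 u v‖ := by
  rw [← Real.sqrt_sq (norm_nonneg (cross3 u v))]
  congr 1
  have h : ‖cross3 u v‖ ^ 2 = (inner ℝ (cross3 u v) (cross3 u v) : ℝ) :=
    (real_inner_self_eq_norm_sq _).symm
  rw [h]
  simp only [inner_eq_dot, cross3]
  rw [cross_dot_cross, dotProduct_comm v u]

lemma sin_angle_eq (u v : E3) (hu : u ≠ 0) (hv : v ≠ 0) :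
    Real.sin (angle u v) = ‖cross3 u v‖ / (‖u‖ * ‖v‖) := by
  have h := sin_angle_mul_norm_mul_norm u v
  rw [sqrt_sub_inner] at h
  rw [eq_div_iff (mul_ne_zero (norm_ne_zero_iff.mpr hu) (norm_ne_zero_iff.mpr hv))]
  exact h

lemma cot_angle_eq (u v : E3) (hu : u ≠ 0) (hv : v ≠ 0) :
    Real.cos (angle u v) / Real.sin (angle u v) = (inner ℝ u v : ℝ) / ‖cross3 u v‖ := by
  by_cases hc : cross3 u v = 0
  · simp [sin_angle_eq u v hu hv, hc]
  rw [cos_angle, sin_angle_eq u v hu hv]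
  have h1 : ‖u‖ ≠ 0 := norm_ne_zero_iff.mpr hu
  have h2 : ‖v‖ ≠ 0 := norm_ne_zero_iff.mpr hv
  have h3 : ‖cross3 u v‖ ≠ 0 := norm_ne_zero_iff.mpr hc
  field_simp

lemma vec_identity (p q r : Fin 3 → ℝ) :
    (q - r) ⨯₃ ((q - p) ⨯₃ (r - p)) =
      ((p - q) ⬝ᵥ (r - q)) • (p - r) + ((p - r) ⬝ᵥ (q - r)) • (p - q) := by
  funext i
  fin_cases i <;>
    simp [cross_apply, dotProduct, Fin.sum_univ_three] <;> ring

lemma flip1 (p q r : E3) : cross3 (p - q) (r - q) = -(cross3 (q - p) (r - p)) := by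
  ext i
  fin_cases i <;> simp [cross3, cross_apply] <;> ring

lemma flip2 (p q r : E3) : cross3 (p - r) (q - r) = cross3 (q - p) (r - p) := by
  ext i
  fin_cases i <;> simp [cross3, cross_apply] <;> ring

/-- **Cotangent form of the area gradient for a single triangle.**
For a nondegenerate triangle `(p, q, r)` in `ℝ³` with area
`Area(x,q,r) = (1/2)‖(q−x)×(r−x)‖`, and interior angles `∠q` (between `p−q`
and `r−q`) and `∠r` (between `p−r` and `q−r`), the gradient of the area with
respect to `p` is `∇_p Area = (1/2)[cot(∠q)(p − r) + cot(∠r)(p − q)]`. -/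
theorem triangle_area_gradient_cotangent
    (p q r : EuclideanSpace ℝ (Fin 3))
    (hnd : cross3 (q - p) (r - p) ≠ 0) :
    gradient (fun x => (1/2 : ℝ) * ‖cross3 (q - x) (r - x)‖) p
      = (1/2 : ℝ) •
          ((Real.cos (angle (p - q) (r - q)) / Real.sin (angle (p - q) (r - q)))
              • (p - r)
            + (Real.cos (angle (p - r) (q - r)) / Real.sin (angle (p - r) (q - r)))
              • (p - q)) := by
  set n : E3 := cross3 (q - p) (r - p) with hn_def
  have hn : n ≠ 0 := hnd
  have hnn : ‖n‖ ≠ 0 := norm_ne_zero_iff.mpr hn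
  -- the linear part of x ↦ (q-x)×(r-x)
  let Lm : E3 →ₗ[ℝ] E3 :=
    { toFun := fun x => cross3 x (q - r)
      map_add' := fun a b => by
        ext i
        fin_cases i <;> simp [cross3, cross_apply] <;> ring
      map_smul' := fun c a => by
        ext i
        fin_cases i <;> simp [cross3, cross_apply] <;> ring }
  let L : E3 →L[ℝ] E3 := LinearMap.toContinuousLinearMap Lm
  have hNd : HasFDerivAt (fun x : E3 => cross3 (q - x) (r - x)) L p := by
    have hfun : (fun x : E3 => cross3 (q - x) (r - x)) = fun x => cross3 q r + L x :=
      funext fun x => key_affine q r x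
    rw [hfun]
    exact L.hasFDerivAt.const_add _
  have h2 : HasFDerivAt (fun x : E3 => ‖cross3 (q - x) (r - x)‖)
      ((‖n‖⁻¹ • innerSL ℝ n).comp L) p :=
    (hasFDerivAt_norm' hn).comp p hNd
  have h3 : HasFDerivAt (fun x : E3 => (1/2 : ℝ) * ‖cross3 (q - x) (r - x)‖)
      ((1/2 : ℝ) • ((‖n‖⁻¹ • innerSL ℝ n).comp L)) p := h2.const_mul _
  set g : E3 := ((2 * ‖n‖)⁻¹) • cross3 (q - r) n with hg_def
  have hgrad : HasGradientAt (fun x : E3 => (1/2 : ℝ) * ‖cross3 (q - x) (r - x)‖) g p := by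
    rw [hasGradientAt_iff_hasFDerivAt]
    refine HasFDerivAt.congr_fderiv h3 ?_
    ext v
    simp only [InnerProductSpace.toDual_apply_apply, ContinuousLinearMap.smul_apply,
      ContinuousLinearMap.comp_apply, ContinuousLinearMap.coe_smul', Pi.smul_apply,
      innerSL_apply_apply, smul_eq_mul]
    have hLv : L v = cross3 v (q - r) := rfl
    rw [hg_def, real_inner_smul_left, hLv]
    have htp : (inner ℝ n (cross3 v (q - r)) : ℝ) = (inner ℝ (cross3 (q - r) n) v : ℝ) := by
      rw [inner_eq_dot, inner_eq_dot]
      show (n : Fin 3 → ℝ) ⬝ᵥ ((v : Fin 3 → ℝ) ⨯₃ ((q : Fin 3 → ℝ) - (r : Fin 3 → ℝ))) =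
        (((q : Fin 3 → ℝ) - (r : Fin 3 → ℝ)) ⨯₃ (n : Fin 3 → ℝ)) ⬝ᵥ (v : Fin 3 → ℝ)
      rw [triple_product_permutation, dotProduct_comm]
    rw [htp]
    field_simp
  rw [hgrad.gradient]
  -- nondegeneracy of edges
  have hpq : p - q ≠ 0 := by
    intro h
    apply hn
    have : q - p = 0 := by rw [← neg_sub p q, h, neg_zero]
    rw [hn_def, this]
    ext i
    fin_cases i <;> simp [cross3, cross_apply]
  have hrq : r - q ≠ 0 := by
    intro h
    apply hn
    have hrq' : r = q := by rwa [sub_eq_zero] at h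
    rw [hn_def, hrq']
    ext i
    fin_cases i <;> simp [cross3, cross_apply] <;> ring
  have hpr : p - r ≠ 0 := by
    intro h
    apply hn
    have : r - p = 0 := by rw [← neg_sub p r, h, neg_zero]
    rw [hn_def, this]
    ext i
    fin_cases i <;> simp [cross3, cross_apply]
  have hqr : q - r ≠ 0 := by
    intro h
    apply hn
    have hqr' : q = r := by rwa [sub_eq_zero] at h
    rw [hn_def, hqr']
    ext i
    fin_cases i <;> simp [cross3, cross_apply] <;> ring
  have hcot1 : Real.cos (angle (p - q) (r - q)) / Real.sin (angle (p - q) (r - q))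
      = (inner ℝ (p - q) (r - q) : ℝ) / ‖n‖ := by
    rw [cot_angle_eq _ _ hpq hrq, flip1, norm_neg, hn_def]
  have hcot2 : Real.cos (angle (p - r) (q - r)) / Real.sin (angle (p - r) (q - r))
      = (inner ℝ (p - r) (q - r) : ℝ) / ‖n‖ := by
    rw [cot_angle_eq _ _ hpr hqr, flip2, hn_def]
  rw [hcot1, hcot2]
  have hkey : cross3 (q - r) n =
      (inner ℝ (p - q) (r - q) : ℝ) • (p - r) + (inner ℝ (p - r) (q - r) : ℝ) • (p - q) := by
    rw [inner_eq_dot, inner_eq_dot]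
    exact congrArg (WithLp.toLp 2) (vec_identity (p : Fin 3 → ℝ) q r)
  rw [hg_def, hkey, smul_add, smul_add, smul_smul, smul_smul, smul_smul, smul_smul]
  congr 1 <;> (congr 1; field_simp; try ring)
end
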